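/- Let n ≥ 2 be an integer, (f_r)_{r=-n}^{n} real data and w_r > 0 for each r ∈ {−n,…,n}. Then λ₀ ≠ 0, and the unique global minimizer (β₀,β₁,β₂) ∈ ℝ³ of ∑_{r=-n}^{n} w_r (f_r − β₀ − β₁r − β₂r²)² satisfies β₀ − (1/4)β₁ + (1/16)β₂ = (α₀/(16λ₀)) ∑_{r=-n}^{n} q₃(r) w_r f_r and β₀ + (1/4)β₁ + (1/16)β₂ = (α₀/(16λ₀)) ∑_{r=-n}^{n} q₁(r) w_r f_r, where q₁(r) = r²α₀α₂ + 4α₀α₄r − 4α₀α₃r² − α₀α₃r − α₂² − 4α₂²r − 16r²α₂² + α₁α₂r + 4α₂α₃ + 4α₁α₂r² + 16α₂α₃r + 16α₂α₄ − 16α₁α₄r + α₁α₃ − 16α₃² − r²α₁² + 16r²α₁α₃ − 4α₁α₄ and q₃(r) = −16r²α₂² + 16α₂α₄ + 16α₂α₃r − 16α₁α₄r + 16r²α₁α₃ − 16α₃² − 4α₀α₄r + 4α₀α₃r² + 4rα₂² − 4α₂α₃ − 4α₁α₂r² + 4α₁α₄ + r²α₀α₂ − r²α₁² − α₂² − α₀α₃r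 + α₁α₃ + α₁α₂r; these are the two refinement rules (2.36) of the family of (2n+1)-point schemes D_{2n+1,2}. -/

import Mathlib

set_option maxHeartbeats 2000000 in
/-- The refinement rules (2.36) of the family of (2n+1)-point schemes `D_{2n+1,2}`:
weighted least squares fitting of a parabola to `(r, f r)`, `r = -n,…,n`,
with positive weights. Then `λ₀ ≠ 0` and the unique minimizer `(β₀, β₁, β₂)`
satisfies the two stated evaluation formulas at `-1/4` and `1/4`. -/
theorem stmt_11 (n : ℤ) (hn : 2 ≤ n) (f w : ℤ → ℝ)
    (hw : ∀ r ∈ Finset.Icc (-n) n, 0 < w r)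
    (α0 α1 α2 α3 α4 χ0 χ1 χ3 lam0 : ℝ)
    (hα0 : α0 = ∑ r ∈ Finset.Icc (-n) n, w r)
    (hα1 : α1 = ∑ r ∈ Finset.Icc (-n) n, (r : ℝ) * w r)
    (hα2 : α2 = ∑ r ∈ Finset.Icc (-n) n, (r : ℝ) ^ 2 * w r)
    (hα3 : α3 = ∑ r ∈ Finset.Icc (-n) n, (r : ℝ) ^ 3 * w r)
    (hα4 : α4 = ∑ r ∈ Finset.Icc (-n) n, (r : ℝ) ^ 4 * w r)
    (hχ0 : χ0 = α0 * α2 - α1 ^ 2)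
    (hχ1 : χ1 = α0 * α3 - α1 * α2)
    (hχ3 : χ3 = α0 * α4 - α2 ^ 2)
    (hlam0 : lam0 = χ0 * χ3 - χ1 ^ 2)
    (E : ℝ × ℝ × ℝ → ℝ)
    (hE : ∀ p : ℝ × ℝ × ℝ, E p = ∑ r ∈ Finset.Icc (-n) n,
      w r * (f r - p.1 - p.2.1 * (r : ℝ) - p.2.2 * (r : ℝ) ^ 2) ^ 2) :
    lam0 ≠ 0 ∧ (∃! p : ℝ × ℝ × ℝ, ∀ q : ℝ × ℝ × ℝ, E p ≤ E q) ∧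
    ∀ p : ℝ × ℝ × ℝ, (∀ q : ℝ × ℝ × ℝ, E p ≤ E q) →
      p.1 - 1 / 4 * p.2.1 + 1 / 16 * p.2.2 =
        (α0 / (16 * lam0)) * ∑ r ∈ Finset.Icc (-n) n,
          (-16 * (r : ℝ) ^ 2 * α2 ^ 2 + 16 * α2 * α4 + 16 * α2 * α3 * (r : ℝ)
            - 16 * α1 * α4 * (r : ℝ) + 16 * (r : ℝ) ^ 2 * α1 * α3 - 16 * α3 ^ 2
            - 4 * α0 * α4 * (r : ℝ) + 4 * α0 * α3 * (r : ℝ) ^ 2 + 4 * (r : ℝ) * α2 ^ 2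
            - 4 * α2 * α3 - 4 * α1 * α2 * (r : ℝ) ^ 2 + 4 * α1 * α4
            + (r : ℝ) ^ 2 * α0 * α2 - (r : ℝ) ^ 2 * α1 ^ 2 - α2 ^ 2
            - α0 * α3 * (r : ℝ) + α1 * α3 + α1 * α2 * (r : ℝ)) * w r * f r ∧
      p.1 + 1 / 4 * p.2.1 + 1 / 16 * p.2.2 =
        (α0 / (16 * lam0)) * ∑ r ∈ Finset.Icc (-n) n,
          ((r : ℝ) ^ 2 * α0 * α2 + 4 * α0 * α4 * (r : ℝ) - 4 * α0 * α3 * (r : ℝ) ^ 2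
            - α0 * α3 * (r : ℝ) - α2 ^ 2 - 4 * α2 ^ 2 * (r : ℝ) - 16 * (r : ℝ) ^ 2 * α2 ^ 2
            + α1 * α2 * (r : ℝ) + 4 * α2 * α3 + 4 * α1 * α2 * (r : ℝ) ^ 2
            + 16 * α2 * α3 * (r : ℝ) + 16 * α2 * α4 - 16 * α1 * α4 * (r : ℝ) + α1 * α3
            - 16 * α3 ^ 2 - (r : ℝ) ^ 2 * α1 ^ 2 + 16 * (r : ℝ) ^ 2 * α1 * α3
            - 4 * α1 * α4) * w r * f r := by
  have h1s : (1:ℤ) ∈ Finset.Icc (-n) n := Finset.mem_Icc.2 ⟨by omega, by omega⟩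
  have h0s : (0:ℤ) ∈ Finset.Icc (-n) n := Finset.mem_Icc.2 ⟨by omega, by omega⟩
  have hm1s : (-1:ℤ) ∈ Finset.Icc (-n) n := Finset.mem_Icc.2 ⟨by omega, by omega⟩
  -- quadratic form evaluation
  have hQ : ∀ a b c : ℝ, (∑ r ∈ Finset.Icc (-n) n, w r * (a + b*(r:ℝ) + c*(r:ℝ)^2)^2)
      = a^2*α0 + (2*a*b)*α1 + (b^2+2*a*c)*α2 + (2*b*c)*α3 + c^2*α4 := by
    intro a b c
    rw [hα0, hα1, hα2, hα3, hα4]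
    simp only [Finset.mul_sum, ← Finset.sum_add_distrib]
    exact Finset.sum_congr rfl fun r _ => by ring
  -- positive definiteness
  have hpos : ∀ a b c : ℝ, ¬(a = 0 ∧ b = 0 ∧ c = 0) →
      0 < ∑ r ∈ Finset.Icc (-n) n, w r * (a + b*(r:ℝ) + c*(r:ℝ)^2)^2 := by
    intro a b c habc
    have hnn : ∀ r ∈ Finset.Icc (-n) n, 0 ≤ w r * (a + b*(r:ℝ) + c*(r:ℝ)^2)^2 :=
      fun r hr => mul_nonneg (hw r hr).le (sq_nonneg _)
    rcases (Finset.sum_nonneg hnn).lt_or_eq with h | h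
    · exact h
    · exfalso
      have hz := (Finset.sum_eq_zero_iff_of_nonneg hnn).1 h.symm
      have key : ∀ r ∈ Finset.Icc (-n) n, a + b*(r:ℝ) + c*(r:ℝ)^2 = 0 := by
        intro r hr
        have := hz r hr
        have h2 : (a + b*(r:ℝ) + c*(r:ℝ)^2)^2 = 0 := by
          rcases mul_eq_zero.1 this with h' | h'
          · exact absurd h' (hw r hr).ne'
          · exact h'
        exact pow_eq_zero_iff (by norm_num) |>.1 h2
      have e0 := key 0 h0s
      have e1 := key 1 h1s
      have em1 := key (-1) hm1s
      push_cast at e0 e1 em1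
      exact habc ⟨by linarith, by linarith, by linarith⟩
      -- from e0 : a = 0 (after simp), e1 : a + b + c = 0, em1 : a - b + c = 0
  have hα0pos : 0 < α0 := by
    rw [hα0]; exact Finset.sum_pos hw ⟨1, h1s⟩
  have hα2pos : 0 < α2 := by
    rw [hα2]
    refine Finset.sum_pos' (fun r hr => mul_nonneg (sq_nonneg _) (hw r hr).le) ⟨1, h1s, ?_⟩
    have := hw 1 h1s
    norm_num
    linarith
  have hχ0pos : 0 < χ0 := by
    have h := hpos α2 (-α1) 0 (fun h' => hα2pos.ne' h'.1)
    rw [hQ] at h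
    have hid : α2^2*α0 + (2*α2*(-α1))*α1 + ((-α1)^2+2*α2*0)*α2 + (2*(-α1)*0)*α3 + 0^2*α4
        = α2 * χ0 := by rw [hχ0]; ring
    rw [hid] at h
    nlinarith [h, hα2pos]
  have hDlam : lam0 = α0 * (α0*α2*α4 + 2*α1*α2*α3 - α2^3 - α1^2*α4 - α0*α3^2) := by
    rw [hlam0, hχ0, hχ1, hχ3]; ring
  have hlamne : lam0 ≠ 0 := by
    intro h0
    have hD : α0*α2*α4 + 2*α1*α2*α3 - α2^3 - α1^2*α4 - α0*α3^2 = 0 := by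
      rcases mul_eq_zero.1 (hDlam ▸ h0) with h' | h'
      · exact absurd h' hα0pos.ne'
      · exact h'
    have hq := hpos (α1*α3-α2^2) (α1*α2-α0*α3) χ0 (fun h' => hχ0pos.ne' h'.2.2)
    rw [hQ] at hq
    have hid : (α1*α3-α2^2)^2*α0 + (2*(α1*α3-α2^2)*(α1*α2-α0*α3))*α1
        + ((α1*α2-α0*α3)^2+2*(α1*α3-α2^2)*χ0)*α2 + (2*(α1*α2-α0*α3)*χ0)*α3 + χ0^2*α4
        = χ0 * (α0*α2*α4 + 2*α1*α2*α3 - α2^3 - α1^2*α4 - α0*α3^2) := by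
      rw [hχ0]; ring
    rw [hid, hD, mul_zero] at hq
    exact lt_irrefl 0 hq
  -- moment sums of data
  set T0 : ℝ := ∑ r ∈ Finset.Icc (-n) n, w r * f r with hT0
  set T1 : ℝ := ∑ r ∈ Finset.Icc (-n) n, (r:ℝ) * w r * f r with hT1
  set T2 : ℝ := ∑ r ∈ Finset.Icc (-n) n, (r:ℝ)^2 * w r * f r with hT2
  -- Cramer solution
  set b0 : ℝ := α0 * ((α2*α4 - α3^2) * T0 + (α2*α3 - α1*α4) * T1 + (α1*α3 - α2^2) * T2) / lam0 with hb0
  set b1 : ℝ := α0 * ((α2*α3 - α1*α4) * T0 + (α0*α4 - α2^2) * T1 + (α1*α2 - α0*α3) * T2) / lam0 with hb1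
  set b2 : ℝ := α0 * ((α1*α3 - α2^2) * T0 + (α1*α2 - α0*α3) * T1 + (α0*α2 - α1^2) * T2) / lam0 with hb2
  have hADne : α0 * (α0*α2*α4 + 2*α1*α2*α3 - α2^3 - α1^2*α4 - α0*α3^2) ≠ 0 := hDlam ▸ hlamne
  have hN0 : α0*b0 + α1*b1 + α2*b2 = T0 := by
    rw [hb0, hb1, hb2, hDlam]; simp only [mul_div_assoc']; rw [← add_div, ← add_div, div_eq_iff hADne]; ring
  have hN1 : α1*b0 + α2*b1 + α3*b2 = T1 := by
    rw [hb0, hb1, hb2, hDlam]; simp only [mul_div_assoc']; rw [← add_div, ← add_div, div_eq_iff hADne]; ring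
  have hN2 : α2*b0 + α3*b1 + α4*b2 = T2 := by
    rw [hb0, hb1, hb2, hDlam]; simp only [mul_div_assoc']; rw [← add_div, ← add_div, div_eq_iff hADne]; ring
  -- cross term
  have hcross : ∀ c0 c1 c2 : ℝ,
      (∑ r ∈ Finset.Icc (-n) n, w r * (f r - b0 - b1*(r:ℝ) - b2*(r:ℝ)^2) * (c0 + c1*(r:ℝ) + c2*(r:ℝ)^2))
      = c0*(T0 - (α0*b0+α1*b1+α2*b2)) + c1*(T1 - (α1*b0+α2*b1+α3*b2)) + c2*(T2 - (α2*b0+α3*b1+α4*b2)) := by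
    intro c0 c1 c2
    rw [hT0, hT1, hT2, hα0, hα1, hα2, hα3, hα4]
    simp only [Finset.mul_sum, Finset.sum_mul, ← Finset.sum_add_distrib, ← Finset.sum_sub_distrib]
    exact Finset.sum_congr rfl fun r _ => by ring
  -- decomposition of E
  have hdec : ∀ q : ℝ × ℝ × ℝ, E q = E (b0, b1, b2) +
      ∑ r ∈ Finset.Icc (-n) n, w r * ((q.1-b0) + (q.2.1-b1)*(r:ℝ) + (q.2.2-b2)*(r:ℝ)^2)^2 := by
    intro q
    rw [hE q, hE (b0, b1, b2)]
    dsimp only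
    have h1 : (∑ r ∈ Finset.Icc (-n) n, w r * (f r - q.1 - q.2.1*(r:ℝ) - q.2.2*(r:ℝ)^2)^2)
        = ∑ r ∈ Finset.Icc (-n) n,
          (w r * (f r - b0 - b1*(r:ℝ) - b2*(r:ℝ)^2)^2
           + w r * ((q.1-b0) + (q.2.1-b1)*(r:ℝ) + (q.2.2-b2)*(r:ℝ)^2)^2
           - 2 * (w r * (f r - b0 - b1*(r:ℝ) - b2*(r:ℝ)^2)
               * ((q.1-b0) + (q.2.1-b1)*(r:ℝ) + (q.2.2-b2)*(r:ℝ)^2))) :=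
      Finset.sum_congr rfl fun r _ => by ring
    rw [h1, Finset.sum_sub_distrib, Finset.sum_add_distrib, ← Finset.mul_sum,
      hcross (q.1-b0) (q.2.1-b1) (q.2.2-b2), hN0, hN1, hN2]
    ring
  have hmin : ∀ q : ℝ × ℝ × ℝ, E (b0, b1, b2) ≤ E q := by
    intro q
    rw [hdec q]
    have : (0:ℝ) ≤ ∑ r ∈ Finset.Icc (-n) n,
        w r * ((q.1-b0) + (q.2.1-b1)*(r:ℝ) + (q.2.2-b2)*(r:ℝ)^2)^2 :=
      Finset.sum_nonneg fun r hr => mul_nonneg (hw r hr).le (sq_nonneg _)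
    linarith
  have huniq : ∀ p : ℝ × ℝ × ℝ, (∀ q : ℝ × ℝ × ℝ, E p ≤ E q) → p = (b0, b1, b2) := by
    intro p hp
    have h1 : E p ≤ E (b0, b1, b2) := hp _
    have h2 := hdec p
    have hQnn : (0:ℝ) ≤ ∑ r ∈ Finset.Icc (-n) n,
        w r * ((p.1-b0) + (p.2.1-b1)*(r:ℝ) + (p.2.2-b2)*(r:ℝ)^2)^2 :=
      Finset.sum_nonneg fun r hr => mul_nonneg (hw r hr).le (sq_nonneg _)
    have hQ0 : (∑ r ∈ Finset.Icc (-n) n,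
        w r * ((p.1-b0) + (p.2.1-b1)*(r:ℝ) + (p.2.2-b2)*(r:ℝ)^2)^2) = 0 := by linarith
    by_contra hne
    have hd : ¬(p.1 - b0 = 0 ∧ p.2.1 - b1 = 0 ∧ p.2.2 - b2 = 0) := by
      rintro ⟨e0, e1, e2⟩
      apply hne
      have : p = (p.1, p.2.1, p.2.2) := rfl
      rw [this]
      congr 1
      · linarith
      · congr 1 <;> linarith
    exact absurd hQ0 (hpos _ _ _ hd).ne'
  refine ⟨hlamne, ⟨(b0, b1, b2), hmin, fun p hp => huniq p hp⟩, ?_⟩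
  intro p hp
  have hpeq := huniq p hp
  subst hpeq
  dsimp only
  constructor
  · have h3 : (∑ r ∈ Finset.Icc (-n) n,
        (-16 * (r : ℝ) ^ 2 * α2 ^ 2 + 16 * α2 * α4 + 16 * α2 * α3 * (r : ℝ)
          - 16 * α1 * α4 * (r : ℝ) + 16 * (r : ℝ) ^ 2 * α1 * α3 - 16 * α3 ^ 2
          - 4 * α0 * α4 * (r : ℝ) + 4 * α0 * α3 * (r : ℝ) ^ 2 + 4 * (r : ℝ) * α2 ^ 2
          - 4 * α2 * α3 - 4 * α1 * α2 * (r : ℝ) ^ 2 + 4 * α1 * α4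
          + (r : ℝ) ^ 2 * α0 * α2 - (r : ℝ) ^ 2 * α1 ^ 2 - α2 ^ 2
          - α0 * α3 * (r : ℝ) + α1 * α3 + α1 * α2 * (r : ℝ)) * w r * f r)
        = (16*α2*α4 - 16*α3^2 - 4*α2*α3 + 4*α1*α4 - α2^2 + α1*α3) * T0
          + (16*α2*α3 - 16*α1*α4 - 4*α0*α4 + 4*α2^2 - α0*α3 + α1*α2) * T1
          + (-16*α2^2 + 16*α1*α3 + 4*α0*α3 - 4*α1*α2 + α0*α2 - α1^2) * T2 := by
      rw [hT0, hT1, hT2]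
      simp only [Finset.mul_sum, ← Finset.sum_add_distrib]
      exact Finset.sum_congr rfl fun r _ => by ring
    rw [h3, hb0, hb1, hb2]
    field_simp
    ring
  · have h3 : (∑ r ∈ Finset.Icc (-n) n,
        ((r : ℝ) ^ 2 * α0 * α2 + 4 * α0 * α4 * (r : ℝ) - 4 * α0 * α3 * (r : ℝ) ^ 2
          - α0 * α3 * (r : ℝ) - α2 ^ 2 - 4 * α2 ^ 2 * (r : ℝ) - 16 * (r : ℝ) ^ 2 * α2 ^ 2
          + α1 * α2 * (r : ℝ) + 4 * α2 * α3 + 4 * α1 * α2 * (r : ℝ) ^ 2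
          + 16 * α2 * α3 * (r : ℝ) + 16 * α2 * α4 - 16 * α1 * α4 * (r : ℝ) + α1 * α3
          - 16 * α3 ^ 2 - (r : ℝ) ^ 2 * α1 ^ 2 + 16 * (r : ℝ) ^ 2 * α1 * α3
          - 4 * α1 * α4) * w r * f r)
        = (-α2^2 + 4*α2*α3 + 16*α2*α4 + α1*α3 - 16*α3^2 - 4*α1*α4) * T0
          + (4*α0*α4 - α0*α3 - 4*α2^2 + α1*α2 + 16*α2*α3 - 16*α1*α4) * T1
          + (α0*α2 - 4*α0*α3 - 16*α2^2 + 4*α1*α2 - α1^2 + 16*α1*α3) * T2 := by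
      rw [hT0, hT1, hT2]
      simp only [Finset.mul_sum, ← Finset.sum_add_distrib]
      exact Finset.sum_congr rfl fun r _ => by ring
    rw [h3, hb0, hb1, hb2]
    field_simp
    ring
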